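/- Let p be a prime, let G be a group, let A be a normal abelian subgroup of G, and let δ : G → A be a derivation with respect to the conjugation action. Let D denote the normal closure in G of the image δ(G). Then for every x ∈ G, the element δ(x^p) lies in the subgroup of G generated by the p-th powers of elements of D together with the iterated commutator subgroup [D, G, …, G] with p−1 copies of G (defined by [D, G] and inductively [D, G, …, G] = [[D, G, …, G], G]). -/

import Mathlib

/-- The iterated commutator subgroup `[H, G, …, G]` with `n` copies of `G`:
`iteratedCommutator H 0 = H` and `iteratedCommutator H (n+1) = ⁅iteratedCommutator H n, G⁆`. -/
def iteratedCommutator {G : Type*} [Group G] (H : Subgroup G) : ℕ → Subgroup G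
  | 0 => H
  | n + 1 => ⁅iteratedCommutator H n, (⊤ : Subgroup G)⁆

lemma iteratedCommutator_le {G : Type*} [Group G] (H : Subgroup G) [H.Normal] :
    ∀ n, iteratedCommutator H n ≤ H
  | 0 => le_rfl
  | n + 1 => le_trans
      (Subgroup.commutator_mono (iteratedCommutator_le H n) le_rfl)
      (Subgroup.commutator_le_left H ⊤)

/-- Pure combinatorial identity in a commutative group. -/
lemma key_prod {Q : Type*} [CommGroup Q] (f : ℕ → Q) (n : ℕ) :
    (∏ j ∈ Finset.range n, (f (j + 1) * f j) ^ (n.choose (j + 1))) * f 0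
      = ∏ j ∈ Finset.range (n + 1), f j ^ ((n + 1).choose (j + 1)) := by
  have h1 : ∏ j ∈ Finset.range (n + 1), f j ^ n.choose j
      = (∏ j ∈ Finset.range n, f (j + 1) ^ n.choose (j + 1)) * f 0 ^ n.choose 0 :=
    Finset.prod_range_succ' _ n
  have h2 : ∏ j ∈ Finset.range (n + 1), f j ^ n.choose (j + 1)
      = (∏ j ∈ Finset.range n, f j ^ n.choose (j + 1)) * f n ^ n.choose (n + 1) :=
    Finset.prod_range_succ _ n
  have h3 : ∀ j, f j ^ n.choose j * f j ^ n.choose (j + 1) = f j ^ ((n + 1).choose (j + 1)) := by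
    intro j
    rw [← pow_add, Nat.choose_succ_succ]
  calc (∏ j ∈ Finset.range n, (f (j + 1) * f j) ^ (n.choose (j + 1))) * f 0
      = ((∏ j ∈ Finset.range n, f (j + 1) ^ n.choose (j + 1)) * f 0 ^ n.choose 0) *
          ((∏ j ∈ Finset.range n, f j ^ n.choose (j + 1)) * f n ^ n.choose (n + 1)) := by
        simp only [mul_pow, Finset.prod_mul_distrib, Nat.choose_zero_right, pow_one,
          Nat.choose_succ_self, pow_zero, mul_one]
        exact mul_right_comm _ _ _
    _ = (∏ j ∈ Finset.range (n + 1), f j ^ n.choose j) *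
          (∏ j ∈ Finset.range (n + 1), f j ^ n.choose (j + 1)) := by rw [h1, h2]
    _ = ∏ j ∈ Finset.range (n + 1), f j ^ ((n + 1).choose (j + 1)) := by
        rw [← Finset.prod_mul_distrib]
        exact Finset.prod_congr rfl fun j _ => h3 j

open scoped commutatorElement in
/-- If `A` is a normal abelian subgroup of `G`, `δ : G → A` is a derivation for the
conjugation action and `D` is the normal closure of the image of `δ`, then for every `x ∈ G`
the element `δ (x ^ p)` lies in the subgroup generated by `p`-th powers of elements of `D`
together with the iterated commutator `[D, G, …, G]` with `p - 1` copies of `G`. -/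
theorem derivation_pow_p_mem
    {p : ℕ} (hp : p.Prime) {G : Type*} [Group G] (A : Subgroup G) (hA : A.Normal)
    (hab : ∀ a b : G, a ∈ A → b ∈ A → a * b = b * a)
    (δ : G → A)
    (hδ : ∀ g h : G, (δ (g * h) : G) = h⁻¹ * (δ g : G) * h * (δ h : G)) :
    ∀ x : G,
      (δ (x ^ p) : G) ∈
        Subgroup.closure
          ({y : G | ∃ d ∈ Subgroup.normalClosure (Set.range fun g : G => (δ g : G)),
              y = d ^ p} ∪
            (iteratedCommutator
              (Subgroup.normalClosure (Set.range fun g : G => (δ g : G))) (p - 1) :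
                Set G)) := by
  intro x
  letI : CommGroup ↥A :=
    { (inferInstance : Group ↥A) with
      mul_comm := fun a b => Subtype.ext (hab a b a.2 b.2) }
  set D := Subgroup.normalClosure (Set.range fun g : G => (δ g : G)) with hD
  set N := Subgroup.closure
      ({y : G | ∃ d ∈ D, y = d ^ p} ∪ (iteratedCommutator D (p - 1) : Set G)) with hN
  -- δ 1 = 1
  have hδ1 : δ 1 = 1 := by
    have h := hδ 1 1
    simp only [one_mul, inv_one, mul_one] at h
    have : (δ 1 : G) = 1 := by
      have := (left_eq_mul (a := (δ 1 : G)) (b := (δ 1 : G))).mp ?_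
      · exact this
      · conv_lhs => rw [h]
    exact Subtype.ext this
  -- conjugation by x as a hom A →* A
  have hconj : ∀ a : ↥A, x⁻¹ * (a : G) * x ∈ A := by
    intro a
    simpa using hA.conj_mem (a : G) a.2 x⁻¹
  set φ : ↥A →* ↥A :=
    { toFun := fun a => ⟨x⁻¹ * (a : G) * x, hconj a⟩
      map_one' := by ext; simp
      map_mul' := fun a b => by
        ext
        push_cast
        group } with hφ
  -- the sequence of iterated "commutators with x"
  set c : ℕ → ↥A := fun j => (fun a : ↥A => φ a * a⁻¹)^[j] (δ x) with hc
  have hc0 : c 0 = δ x := rfl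
  have hcsucc : ∀ j, c (j + 1) = φ (c j) * (c j)⁻¹ := fun j =>
    Function.iterate_succ_apply' _ j (δ x)
  have hφc : ∀ j, φ (c j) = c (j + 1) * c j := by
    intro j
    rw [hcsucc j, inv_mul_cancel_right]
  -- the main identity
  have main : ∀ n : ℕ, δ (x ^ n) = ∏ j ∈ Finset.range n, c j ^ (n.choose (j + 1)) := by
    intro n
    induction n with
    | zero => simpa using hδ1
    | succ n ih =>
      have step : δ (x ^ (n + 1)) = φ (δ (x ^ n)) * δ x := by
        apply Subtype.ext
        have h := hδ (x ^ n) x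
        rw [← pow_succ] at h
        simpa [hφ, mul_assoc] using h
      calc δ (x ^ (n + 1)) = φ (δ (x ^ n)) * δ x := step
        _ = (∏ j ∈ Finset.range n, (c (j + 1) * c j) ^ n.choose (j + 1)) * c 0 := by
            rw [ih, map_prod]
            simp only [map_pow, hφc]
            rfl
        _ = ∏ j ∈ Finset.range (n + 1), c j ^ ((n + 1).choose (j + 1)) := key_prod c n
  -- membership of c j in the iterated commutators
  have hmemD : ∀ j, (c j : G) ∈ iteratedCommutator D j := by
    intro j
    induction j with
    | zero =>
      exact Subgroup.subset_normalClosure ⟨x, rfl⟩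
    | succ j ihj =>
      have hcoe : (c (j + 1) : G) = ⁅x⁻¹, (c j : G)⁆ := by
        rw [hcsucc j]
        push_cast
        simp [hφ, commutatorElement_def, mul_assoc]
      rw [hcoe, ← commutatorElement_inv]
      exact (iteratedCommutator D (j + 1)).inv_mem
        (Subgroup.commutator_mem_commutator ihj (Subgroup.mem_top _))
  have hDle : ∀ j, iteratedCommutator D j ≤ D := fun j => iteratedCommutator_le D j
  -- conclude
  rw [main p]
  refine Finset.prod_induction _ (fun a : ↥A => (a : G) ∈ N)
    (fun a b ha hb => mul_mem ha hb) (one_mem N) ?_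
  intro j hj
  show ((c j ^ p.choose (j + 1) : ↥A) : G) ∈ N
  rw [SubgroupClass.coe_pow]
  rw [Finset.mem_range] at hj
  rcases eq_or_lt_of_le (Nat.succ_le_of_lt hj) with hjp | hjp
  · -- j + 1 = p : the last iterated commutator
    have : p.choose (j + 1) = 1 := by
      rw [show j + 1 = p by omega, Nat.choose_self]
    rw [this, pow_one]
    apply Subgroup.subset_closure
    apply Set.mem_union_right
    have : j = p - 1 := by omega
    rw [this] at *
    exact hmemD (p - 1)
  · -- j + 1 < p : exponent divisible by p
    obtain ⟨m, hm⟩ := hp.dvd_choose_self (Nat.succ_ne_zero j) hjp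
    rw [hm, mul_comm p m, pow_mul]
    apply Subgroup.subset_closure
    apply Set.mem_union_left
    exact ⟨(c j : G) ^ m, Subgroup.pow_mem _ (hDle j (hmemD j)) m, rfl⟩
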